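/- Let X, Y be compact Hausdorff spaces, E, F Banach spaces over 𝕂 ∈ {ℝ, ℂ} with F strictly convex, A and B 𝕂-linear subspaces of C(X,E) and C(Y,F), respectively, both containing all constant functions, and let T : A → B be a surjective (not necessarily linear) isometry which maps the set of constant functions in A onto the set of constant functions in B. Then there exist a subset Y₀ of Y, a continuous surjection Φ : Y₀ → Θ(Ā), and a surjective real-linear isometry V : E → F such that Tf(y) = T0(y) + V(f(Φ(y))) for all f ∈ A and all y ∈ Y₀. -/

import Mathlib

open Set Metric

variable {𝕂 : Type*} [RCLike 𝕂]
variable {X : Type*} [TopologicalSpace X] [CompactSpace X] [T2Space X]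
variable {Y : Type*} [TopologicalSpace Y] [CompactSpace Y] [T2Space Y]
variable {E : Type*} [NormedAddCommGroup E] [NormedSpace ℝ E] [NormedSpace 𝕂 E]
  [IsScalarTower ℝ 𝕂 E] [CompleteSpace E]
variable {F : Type*} [NormedAddCommGroup F] [NormedSpace ℝ F] [NormedSpace 𝕂 F]
  [IsScalarTower ℝ 𝕂 F] [CompleteSpace F]

/-- The set `Θ(A)` of strong boundary points of a set `A` of functions in `C(X,E)`. -/
def strongBoundaryPoints {Z M : Type*} [TopologicalSpace Z] [CompactSpace Z]
    [NormedAddCommGroup M] (A : Set C(Z, M)) : Set Z :=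
  {x | ∀ U ∈ nhds x, ∀ ε : ℝ, 0 < ε → ∀ u : M, ‖u‖ = 1 →
    ∃ f ∈ A, ‖f‖ = 1 ∧ f x = u ∧ ∀ y, y ∉ U → ‖f y‖ < ε}

lemma strict_aux {F : Type*} [NormedAddCommGroup F] [NormedSpace ℝ F] [StrictConvexSpace ℝ F]
    {a b : F} (ha : ‖a‖ ≤ 1) (hb : ‖b‖ ≤ 1) (hab : ‖a + b‖ = 2) :
    a = b ∧ ‖a‖ = 1 := by
  have hsum := norm_add_le a b
  have ha1 : ‖a‖ = 1 := by linarith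
  have hb1 : ‖b‖ = 1 := by linarith
  exact ⟨eq_of_norm_eq_of_norm_add_eq (ha1.trans hb1.symm) (by rw [hab, ha1, hb1]; norm_num), ha1⟩

lemma exists_V {E F : Type*} [NormedAddCommGroup E] [NormedSpace ℝ E]
    [NormedAddCommGroup F] [NormedSpace ℝ F]
    (s : E → F) (hiso : ∀ u u', ‖s u - s u'‖ = ‖u - u'‖) (hsurj : Function.Surjective s) :
    ∃ V : E →ₗᵢ[ℝ] F, Function.Surjective ⇑V ∧ ∀ u, V u = s u - s 0 := by
  have hginj : Function.Injective (fun u => s u - s 0) := by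
    intro u u' h
    simp only [sub_left_inj] at h
    have h3 : ‖u - u'‖ = 0 := by rw [← hiso, h, sub_self, norm_zero]
    simpa [sub_eq_zero] using norm_eq_zero.mp h3
  have hgsurj : Function.Surjective (fun u => s u - s 0) := by
    intro v; obtain ⟨u, hu⟩ := hsurj (v + s 0); exact ⟨u, by simp [hu]⟩
  have hgiso : Isometry (fun u => s u - s 0) := Isometry.of_dist_eq (by
    intro u u'
    simp only [dist_eq_norm, sub_sub_sub_cancel_right]
    exact hiso u u')
  set e₂ : E ≃ᵢ F := ⟨Equiv.ofBijective _ ⟨hginj, hgsurj⟩, hgiso⟩ with he₂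
  have hce : ⇑e₂ = fun u => s u - s 0 := rfl
  have h0 : e₂ 0 = 0 := by rw [show e₂ 0 = s 0 - s 0 from congrFun hce 0, sub_self]
  refine ⟨(e₂.toRealLinearIsometryEquivOfMapZero h0).toLinearIsometry, ?_, ?_⟩
  · exact (e₂.toRealLinearIsometryEquivOfMapZero h0).surjective
  · intro u
    have hc : ⇑(e₂.toRealLinearIsometryEquivOfMapZero h0) = ⇑e₂ :=
      IsometryEquiv.coe_toRealLinearIsometryEquivOfMapZero _ _
    show (e₂.toRealLinearIsometryEquivOfMapZero h0) u = _
    rw [hc, hce]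

lemma exists_G {E' F' : Type*} [NormedAddCommGroup E'] [NormedSpace ℝ E']
    [NormedAddCommGroup F'] [NormedSpace ℝ F'] [CompleteSpace F']
    (Ar : Submodule ℝ E') (Br : Submodule ℝ F') (T : E' → F')
    (hmap : ∀ f ∈ Ar, T f ∈ Br) (hsurjT : ∀ g ∈ Br, ∃ f ∈ Ar, T f = g)
    (hiso : ∀ f ∈ Ar, ∀ g ∈ Ar, ‖T f - T g‖ = ‖f - g‖) :
    ∃ G : ↥Ar.topologicalClosure →L[ℝ] F',
      (∀ f (hf : f ∈ Ar), G ⟨f, Ar.le_topologicalClosure hf⟩ = T f - T 0) ∧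
      (∀ k : ↥Ar.topologicalClosure, ‖G k‖ = ‖(k : E')‖) := by
  have h0A : (0 : E') ∈ Ar := zero_mem Ar
  have hmem : ∀ f : ↥Ar, T f - T 0 ∈ Br := fun f => sub_mem (hmap _ f.2) (hmap _ h0A)
  have hinj : Function.Injective (fun f : ↥Ar => (⟨T f - T 0, hmem f⟩ : ↥Br)) := by
    intro f g h
    have h1 : T (f : E') = T (g : E') := by
      have := congrArg Subtype.val h
      simpa [sub_left_inj] using this
    have h2 : ‖(f : E') - (g : E')‖ = 0 := by
      rw [← hiso _ f.2 _ g.2, h1, sub_self, norm_zero]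
    exact Subtype.ext (by simpa [sub_eq_zero] using norm_eq_zero.mp h2)
  have hsurj : Function.Surjective (fun f : ↥Ar => (⟨T f - T 0, hmem f⟩ : ↥Br)) := by
    rintro ⟨g, hg⟩
    obtain ⟨f, hf, hTf⟩ := hsurjT (g + T 0) (add_mem hg (hmap _ h0A))
    exact ⟨⟨f, hf⟩, Subtype.ext (by simp [hTf])⟩
  have hisom : Isometry (fun f : ↥Ar => (⟨T f - T 0, hmem f⟩ : ↥Br)) := by
    apply Isometry.of_dist_eq
    intro f g
    have : dist (T (f : E') - T 0) (T (g : E') - T 0) = dist (f : E') (g : E') := by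
      simp only [dist_eq_norm, sub_sub_sub_cancel_right]
      exact hiso _ f.2 _ g.2
    exact this
  set L : ↥Ar ≃ᵢ ↥Br := ⟨Equiv.ofBijective _ ⟨hinj, hsurj⟩, hisom⟩ with hL
  have hLcoe : ∀ f : ↥Ar, (L f : F') = T f - T 0 := fun f => rfl
  have hL0 : L 0 = 0 := Subtype.ext (by
    have := hLcoe 0
    simpa using this)
  set L' := L.toRealLinearIsometryEquivOfMapZero hL0 with hL'
  have hL'coe : ∀ f : ↥Ar, (L' f : F') = T f - T 0 := by
    intro f
    rw [show L' f = L f from congrFun (IsometryEquiv.coe_toRealLinearIsometryEquivOfMapZero _ _) f]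
    exact hLcoe f
  set f₀ : ↥Ar →L[ℝ] F' := Br.subtypeL.comp (L'.toLinearIsometry.toContinuousLinearMap) with hf₀
  have hf₀coe : ∀ f : ↥Ar, f₀ f = T f - T 0 := fun f => hL'coe f
  set e : ↥Ar →L[ℝ] ↥Ar.topologicalClosure :=
    { toLinearMap := Submodule.inclusion Ar.le_topologicalClosure,
      cont := Continuous.subtype_mk continuous_subtype_val _ } with he
  have heiso : Isometry ⇑e := Isometry.of_dist_eq (fun f g => rfl)
  have hdense : DenseRange ⇑e := by
    intro k
    have hk : (k : E') ∈ closure (Ar : Set E') := by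
      rw [← Submodule.topologicalClosure_coe]; exact k.2
    rw [mem_closure_iff_seq_limit] at hk
    obtain ⟨x, hx, hlim⟩ := hk
    rw [mem_closure_iff_seq_limit]
    refine ⟨fun n => e ⟨x n, hx n⟩, fun n => ⟨⟨x n, hx n⟩, rfl⟩, ?_⟩
    rw [tendsto_subtype_rng]
    exact hlim
  set G := f₀.extend e with hG
  refine ⟨G, ?_, ?_⟩
  · intro f hf
    have h1 := ContinuousLinearMap.extend_eq f₀ hdense heiso.isUniformInducing ⟨f, hf⟩
    rw [show e ⟨f, hf⟩ = ⟨f, Ar.le_topologicalClosure hf⟩ from rfl] at h1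
    rw [hG, h1, hf₀coe]
  · intro k
    refine DenseRange.induction_on hdense k ?_ ?_
    · exact isClosed_eq (G.continuous.norm) (continuous_subtype_val.norm)
    · intro a
      have h1 : G (e a) = f₀ a :=
        ContinuousLinearMap.extend_eq f₀ hdense heiso.isUniformInducing a
      have h2 : ((e a : ↥Ar.topologicalClosure) : E') = (a : E') := rfl
      rw [h1, hf₀coe, h2, hiso _ a.2 _ h0A, sub_zero]

lemma norm_const' {Z M : Type*} [TopologicalSpace Z] [CompactSpace Z] [Nonempty Z]
    [NormedAddCommGroup M] (v : M) : ‖ContinuousMap.const Z v‖ = ‖v‖ := by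
  refine le_antisymm ((ContinuousMap.norm_le _ (norm_nonneg v)).2 (fun z => le_rfl)) ?_
  simpa using ContinuousMap.norm_coe_le_norm (ContinuousMap.const Z v) (Classical.arbitrary Z)

set_option maxHeartbeats 2000000 in
/-- If `A` and `B` contain the constant functions and the surjective isometry `T`
maps the constant functions in `A` onto the constant functions in `B`, then the
representation holds with a single surjective real-linear isometry `V : E → F`. -/
theorem stmt13 [Nonempty X] [Nontrivial E] [StrictConvexSpace ℝ F]
    (A : Subspace 𝕂 C(X, E)) (B : Subspace 𝕂 C(Y, F))
    (hconstA : ∀ u : E, ContinuousMap.const X u ∈ A)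
    (hconstB : ∀ v : F, ContinuousMap.const Y v ∈ B)
    (T : C(X, E) → C(Y, F))
    (hmap : ∀ f ∈ A, T f ∈ B)
    (hsurj : ∀ g ∈ B, ∃ f ∈ A, T f = g)
    (hiso : ∀ f ∈ A, ∀ g ∈ A, ‖T f - T g‖ = ‖f - g‖)
    (hTconst : ∀ u : E, ∃ v : F, T (ContinuousMap.const X u) = ContinuousMap.const Y v)
    (hTconst' : ∀ v : F, ∃ u : E, T (ContinuousMap.const X u) = ContinuousMap.const Y v) :
    ∃ (Y₀ : Set Y) (Φ : Y₀ → X) (V : E →ₗᵢ[ℝ] F),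
      Function.Surjective V ∧
      Continuous Φ ∧
      (∀ y : Y₀, Φ y ∈ strongBoundaryPoints (closure (A : Set C(X, E)))) ∧
      (∀ x ∈ strongBoundaryPoints (closure (A : Set C(X, E))), ∃ y : Y₀, Φ y = x) ∧
      (∀ f ∈ A, ∀ y : Y₀, T f (y : Y) = T 0 (y : Y) + V (f (Φ y))) := by
  classical
  obtain ⟨u₀, hu₀⟩ := exists_norm_eq E (zero_le_one)
  -- Y is nonempty
  haveI hY : Nonempty Y := by
    by_contra hY
    rw [not_nonempty_iff] at hY
    have h1 := hiso _ (hconstA u₀) _ (hconstA 0)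
    have h2 : T (ContinuousMap.const X u₀) - T (ContinuousMap.const X 0) = 0 := by
      ext y; exact (hY.false y).elim
    have h3 : ContinuousMap.const X u₀ - ContinuousMap.const X 0 = ContinuousMap.const X u₀ := by
      ext z; simp
    rw [h2, norm_zero, h3, norm_const', hu₀] at h1
    norm_num at h1
  choose s hs using hTconst
  have hconst0 : (ContinuousMap.const X (0 : E)) = 0 := by ext z; simp
  have hT0 : T 0 = ContinuousMap.const Y (s 0) := by rw [← hconst0]; exact hs 0
  have hsiso : ∀ u u', ‖s u - s u'‖ = ‖u - u'‖ := by
    intro u u'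
    have h1 := hiso _ (hconstA u) _ (hconstA u')
    rw [hs u, hs u'] at h1
    have h2 : ContinuousMap.const Y (s u) - ContinuousMap.const Y (s u') =
        ContinuousMap.const Y (s u - s u') := by ext z; simp
    have h3 : ContinuousMap.const X u - ContinuousMap.const X u' =
        ContinuousMap.const X (u - u') := by ext z; simp
    rw [h2, h3, norm_const', norm_const'] at h1
    exact h1
  have hssurj : Function.Surjective s := by
    intro v
    obtain ⟨u, hu⟩ := hTconst' v
    refine ⟨u, ?_⟩
    have h1 : ContinuousMap.const Y (s u) = ContinuousMap.const Y v := (hs u).symm.trans hu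
    exact ContinuousMap.congr_fun h1 (Classical.arbitrary Y)
  obtain ⟨V, hVsurj, hV⟩ := exists_V s hsiso hssurj
  -- the extended linear isometry G
  set Ar : Submodule ℝ C(X, E) := A.restrictScalars ℝ with hAr
  set Br : Submodule ℝ C(Y, F) := B.restrictScalars ℝ with hBr
  obtain ⟨G, hGA, hGnorm⟩ := exists_G Ar Br T hmap hsurj hiso
  have hKset : (Ar.topologicalClosure : Set C(X, E)) = closure (A : Set C(X, E)) :=
    Submodule.topologicalClosure_coe Ar
  have hmemK : ∀ f : C(X, E), f ∈ closure (A : Set C(X, E)) → f ∈ Ar.topologicalClosure := fun f hf => by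
    rw [← SetLike.mem_coe, hKset]; exact hf
  have hGle : ∀ (k : ↥Ar.topologicalClosure) (y : Y), ‖G k y‖ ≤ ‖(k : C(X, E))‖ := fun k y =>
    (ContinuousMap.norm_coe_le_norm (G k) y).trans (hGnorm k).le
  have hGconst : ∀ u : E,
      G ⟨ContinuousMap.const X u, Ar.le_topologicalClosure (hconstA u)⟩ =
        ContinuousMap.const Y (V u) := by
    intro u
    rw [hGA _ (hconstA u), hs u, hT0]
    ext z; simp [hV u]
  set Θ := strongBoundaryPoints (closure (A : Set C(X, E))) with hΘ
  have hΘmem : ∀ x, x ∈ Θ → ∀ U ∈ nhds x, ∀ ε : ℝ, 0 < ε → ∀ u : E, ‖u‖ = 1 →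
      ∃ f ∈ closure (A : Set C(X, E)), ‖f‖ = 1 ∧ f x = u ∧ ∀ z, z ∉ U → ‖f z‖ < ε :=
    fun x hx => hx
  -- KEY: suitable point for each strong boundary point
  have key : ∀ x, x ∈ Θ → ∃ y : Y, ∀ k : ↥Ar.topologicalClosure, G k y = V ((k : C(X, E)) x) := by
    intro x hx
    set cu : ↥Ar.topologicalClosure := ⟨ContinuousMap.const X u₀, Ar.le_topologicalClosure (hconstA u₀)⟩ with hcu
    set P : Set ↥Ar.topologicalClosure := {q | ‖(q : C(X, E))‖ ≤ 1 ∧ (q : C(X, E)) x = u₀} with hP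
    have hcuc : ((cu : ↥Ar.topologicalClosure) : C(X, E)) = ContinuousMap.const X u₀ := rfl
    have hcuP : cu ∈ P := by
      constructor
      · rw [hcuc, norm_const', hu₀]
      · rw [hcuc]; rfl
    have hPnorm : ∀ q ∈ P, ‖(q : C(X, E))‖ = 1 := by
      intro q hq
      refine le_antisymm hq.1 ?_
      calc (1 : ℝ) = ‖(q : C(X, E)) x‖ := by rw [hq.2, hu₀]
        _ ≤ ‖(q : C(X, E))‖ := ContinuousMap.norm_coe_le_norm _ x
    have hmid : ∀ q₁ ∈ P, ∀ q₂ ∈ P, ((1 / 2 : ℝ) • (q₁ + q₂)) ∈ P := by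
      intro q₁ h₁ q₂ h₂
      have hco : (((1 / 2 : ℝ) • (q₁ + q₂) : ↥Ar.topologicalClosure) : C(X, E)) =
          (1 / 2 : ℝ) • ((q₁ : C(X, E)) + (q₂ : C(X, E))) := rfl
      constructor
      · rw [hco, norm_smul]
        have h3 := norm_add_le (q₁ : C(X, E)) (q₂ : C(X, E))
        have h4 : ‖(1 / 2 : ℝ)‖ = 1 / 2 := by norm_num [Real.norm_eq_abs]
        rw [h4]
        nlinarith [h₁.1, h₂.1]
      · show (((1 / 2 : ℝ) • (q₁ + q₂) : ↥Ar.topologicalClosure) : C(X, E)) x = u₀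
        rw [hco, ContinuousMap.smul_apply, ContinuousMap.add_apply, h₁.2, h₂.2,
          ← two_smul ℝ u₀, smul_smul]
        norm_num
    have hnorm2 : ∀ a b : F, ‖(1 / 2 : ℝ) • (a + b)‖ = 1 → ‖a + b‖ = 2 := by
      intro a b h
      rw [norm_smul] at h
      have h4 : ‖(1 / 2 : ℝ)‖ = 1 / 2 := by norm_num [Real.norm_eq_abs]
      rw [h4] at h
      linarith
    set M : ↥Ar.topologicalClosure → Set Y := fun q => {y | ‖G q y‖ = 1} with hM
    have hMclosed : ∀ q, IsClosed (M q) :=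
      fun q => isClosed_eq ((map_continuous (G q)).norm) continuous_const
    have hMq : ∀ q ∈ P, (M q).Nonempty := by
      intro q hq
      obtain ⟨y, -, hy⟩ := isCompact_univ.exists_isMaxOn univ_nonempty
        (Continuous.continuousOn (Continuous.norm (map_continuous (G q))))
      refine ⟨y, le_antisymm ((hGle q y).trans (hPnorm q hq).le) ?_⟩
      have h5 : ‖G q‖ ≤ ‖G q y‖ :=
        (ContinuousMap.norm_le _ (norm_nonneg _)).2 fun z => hy (Set.mem_univ z)
      rw [hGnorm q, hPnorm q hq] at h5
      exact h5
    haveI : Nonempty P := ⟨⟨cu, hcuP⟩⟩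
    have hdir : Directed (· ⊇ ·) (fun i : P => M i.1) := by
      intro i j
      refine ⟨⟨(1 / 2 : ℝ) • (i.1 + j.1), hmid _ i.2 _ j.2⟩, ?_, ?_⟩
      all_goals {
        intro y hy
        have hval : G ((1 / 2 : ℝ) • (i.1 + j.1)) y =
            (1 / 2 : ℝ) • (G i.1 y + G j.1 y) := by
          rw [map_smul, map_add]
          simp [ContinuousMap.smul_apply, ContinuousMap.add_apply]
        have h6 : ‖G i.1 y + G j.1 y‖ = 2 := by
          apply hnorm2
          rw [← hval]
          exact hy
        have h7 := strict_aux ((hGle i.1 y).trans (hPnorm _ i.2).le)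
          ((hGle j.1 y).trans (hPnorm _ j.2).le) h6
        have h8 : ‖G j.1 y‖ = 1 := by rw [← h7.1]; exact h7.2
        first
          | exact h7.2
          | exact h8 }
    obtain ⟨y, hy⟩ :=
      IsCompact.nonempty_iInter_of_directed_nonempty_isCompact_isClosed _ hdir
        (fun i => hMq _ i.2) (fun i => IsClosed.isCompact (hMclosed i.1)) (fun i => hMclosed i.1)
    have hyM : ∀ q ∈ P, ‖G q y‖ = 1 := fun q hq => mem_iInter.mp hy ⟨q, hq⟩
    have hcuval : G cu y = V u₀ := by
      rw [hcu, hGconst u₀]; rfl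
    have hyV : ∀ q ∈ P, G q y = V u₀ := by
      intro q hq
      have hm : ((1 / 2 : ℝ) • (q + cu)) ∈ P := hmid _ hq _ hcuP
      have h1 := hyM _ hm
      have hval : G ((1 / 2 : ℝ) • (q + cu)) y = (1 / 2 : ℝ) • (G q y + G cu y) := by
        rw [map_smul, map_add]
        simp [ContinuousMap.smul_apply, ContinuousMap.add_apply]
      have h6 : ‖G q y + V u₀‖ = 2 := by
        apply hnorm2
        rw [← hcuval, ← hval]
        exact h1
      have h7 : ‖V u₀‖ ≤ 1 := by rw [V.norm_map, hu₀]
      exact (strict_aux ((hGle q y).trans (hPnorm _ hq).le) h7 h6).1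
    refine ⟨y, ?_⟩
    have main : ∀ (k : ↥Ar.topologicalClosure) (t : ℝ), 0 < t →
        t * (‖(k : C(X, E))‖ + ‖(k : C(X, E)) x‖) ≤ 1 / 4 →
        ‖V u₀ + t • (G k y - V ((k : C(X, E)) x))‖ ≤ 1 := by
      intro k t ht0 htb
      set f := (k : C(X, E)) with hf
      set w := f x with hw
      set b := G k y - V w with hb
      have step : ∀ ε : ℝ, 0 < ε → ε ≤ 1 / 2 → ‖V u₀ + t • b‖ ≤ 1 + t * ε := by
        intro ε hε hε2
        have hU₁nhds : (⇑f) ⁻¹' (ball w ε) ∈ nhds x := by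
          apply ((isOpen_ball).preimage (map_continuous f)).mem_nhds
          simp [hw, hε]
        obtain ⟨h, hhA, hhn, hhx, hhsmall⟩ := hΘmem x hx _ hU₁nhds ε hε u₀ hu₀
        set hk : ↥Ar.topologicalClosure := ⟨h, hmemK h hhA⟩ with hhk
        have hkP : hk ∈ P := ⟨hhn.le, hhx⟩
        set cw : ↥Ar.topologicalClosure := ⟨ContinuousMap.const X w, Ar.le_topologicalClosure (hconstA w)⟩ with hcw
        set p : ↥Ar.topologicalClosure := hk + t • (k - cw) with hp
        have hpc : ((p : ↥Ar.topologicalClosure) : C(X, E)) = h + t • (f - ContinuousMap.const X w) := rfl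
        have hpnorm : ‖(p : C(X, E))‖ ≤ 1 + t * ε := by
          rw [hpc]
          refine (ContinuousMap.norm_le _ (by positivity)).2 fun z => ?_
          rw [ContinuousMap.add_apply, ContinuousMap.smul_apply, ContinuousMap.sub_apply,
            ContinuousMap.const_apply]
          have hna : ‖h z + t • (f z - w)‖ ≤ ‖h z‖ + t * ‖f z - w‖ := by
            refine (norm_add_le _ _).trans ?_
            rw [norm_smul, Real.norm_eq_abs, abs_of_pos ht0]
          by_cases hz : z ∈ (⇑f) ⁻¹' (ball w ε)
          · have h1 : ‖f z - w‖ ≤ ε := by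
              have h2 : dist (f z) w < ε := hz
              rw [dist_eq_norm] at h2
              exact h2.le
            have h3 : ‖h z‖ ≤ 1 := by
              have := ContinuousMap.norm_coe_le_norm h z
              rw [hhn] at this; exact this
            have h5 : t * ‖f z - w‖ ≤ t * ε := mul_le_mul_of_nonneg_left h1 ht0.le
            linarith
          · have h1 : ‖h z‖ < ε := hhsmall z hz
            have h2 : ‖f z - w‖ ≤ ‖f‖ + ‖w‖ := by
              refine (norm_sub_le _ _).trans ?_
              have := ContinuousMap.norm_coe_le_norm f z
              linarith
            have h5 : t * ‖f z - w‖ ≤ t * (‖f‖ + ‖w‖) := mul_le_mul_of_nonneg_left h2 ht0.le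
            have h6 : (0:ℝ) ≤ t * ε := mul_nonneg ht0.le hε.le
            linarith
        have hGp : G p y = V u₀ + t • b := by
          have h1 : G p = G hk + t • (G k - G cw) := by rw [hp, map_add, map_smul, map_sub]
          have h2 : G hk y = V u₀ := hyV _ hkP
          have h3 : G cw y = V w := by rw [hcw, hGconst w]; rfl
          rw [h1]
          rw [ContinuousMap.add_apply, ContinuousMap.smul_apply, ContinuousMap.sub_apply,
            h2, h3, hb]
        calc ‖V u₀ + t • b‖ = ‖G p y‖ := by rw [hGp]
          _ ≤ ‖(p : C(X, E))‖ := hGle p y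
          _ ≤ 1 + t * ε := hpnorm
      by_contra hcon
      push_neg at hcon
      have hc1 : (0 : ℝ) < ‖V u₀ + t • b‖ - 1 := by linarith
      have hε : 0 < min (1 / 2) ((‖V u₀ + t • b‖ - 1) / (2 * t)) :=
        lt_min (by norm_num) (by positivity)
      have h1 := step _ hε (min_le_left _ _)
      have h2 : t * min (1 / 2) ((‖V u₀ + t • b‖ - 1) / (2 * t)) ≤
          t * ((‖V u₀ + t • b‖ - 1) / (2 * t)) := by
        apply mul_le_mul_of_nonneg_left (min_le_right _ _) ht0.le
      have h3 : t * ((‖V u₀ + t • b‖ - 1) / (2 * t)) = (‖V u₀ + t • b‖ - 1) / 2 := by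
        field_simp
      rw [h3] at h2
      linarith
    intro k
    set f := (k : C(X, E)) with hf
    set w := f x with hw
    set t : ℝ := (4 * ‖f‖ + 4 * ‖w‖ + 1)⁻¹ with ht
    have htpos : (0 : ℝ) < 4 * ‖f‖ + 4 * ‖w‖ + 1 := by positivity
    have ht0 : 0 < t := by rw [ht]; positivity
    have htmul : t * (4 * ‖f‖ + 4 * ‖w‖ + 1) = 1 := inv_mul_cancel₀ htpos.ne'
    have htb : t * (‖f‖ + ‖w‖) ≤ 1 / 4 := by nlinarith [norm_nonneg f, norm_nonneg w]
    have hk1 := main k t ht0 htb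
    have hnegc : ((-k : ↥Ar.topologicalClosure) : C(X, E)) = -f := rfl
    have htb' : t * (‖((-k : ↥Ar.topologicalClosure) : C(X, E))‖ + ‖((-k : ↥Ar.topologicalClosure) : C(X, E)) x‖) ≤ 1 / 4 := by
      rw [hnegc, norm_neg, ContinuousMap.neg_apply, norm_neg]
      exact htb
    have hk2 := main (-k) t ht0 htb'
    have hneg2 : G (-k) y - V (((-k : ↥Ar.topologicalClosure) : C(X, E)) x) = -(G k y - V w) := by
      rw [map_neg, hnegc, ContinuousMap.neg_apply, ContinuousMap.neg_apply, map_neg]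
      abel
    rw [hneg2, smul_neg, ← sub_eq_add_neg] at hk2
    set b := G k y - V w with hb
    have hsum : (V u₀ + t • b) + (V u₀ - t • b) = (2 : ℝ) • V u₀ := by
      rw [two_smul]
      abel
    have hnormsum : ‖(V u₀ + t • b) + (V u₀ - t • b)‖ = 2 := by
      rw [hsum, norm_smul, V.norm_map, hu₀, Real.norm_eq_abs]
      norm_num
    obtain ⟨heq, -⟩ := strict_aux hk1 hk2 hnormsum
    have hb0 : b = 0 := by
      have h1 : t • b + t • b = 0 := by
        have := sub_eq_zero.mpr heq
        rw [show V u₀ + t • b - (V u₀ - t • b) = t • b + t • b by abel] at this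
        exact this
      have h2 : (2 * t) • b = 0 := by
        rw [two_mul, add_smul]
        exact h1
      have h3 : (2 * t) ≠ 0 := by positivity
      exact (smul_eq_zero.mp h2).resolve_left h3
    rw [← sub_eq_zero]
    exact hb0
  -- separation of strong boundary points by functions in the closure
  have hsep : ∀ x, x ∈ Θ → ∀ x' : X,
      (∀ k : ↥Ar.topologicalClosure, (k : C(X, E)) x = (k : C(X, E)) x') → x = x' := by
    intro x hx x' hagree
    by_contra hne
    have hU : ({x'}ᶜ : Set X) ∈ nhds x :=
      (isOpen_compl_singleton).mem_nhds (by simpa using hne)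
    obtain ⟨f, hfA, hfn, hfx, hfsmall⟩ := hΘmem x hx _ hU (1 / 2) (by norm_num) u₀ hu₀
    have h1 := hagree ⟨f, hmemK f hfA⟩
    have h2 : ‖f x'‖ < 1 / 2 := hfsmall x' (by simp)
    rw [show ((⟨f, hmemK f hfA⟩ : ↥Ar.topologicalClosure) : C(X, E)) = f from rfl] at h1
    rw [← h1, hfx, hu₀] at h2
    norm_num at h2
  choose σ hσ using key
  set Y₀ : Set Y := {y | ∃ x, ∃ hx : x ∈ Θ, σ x hx = y} with hY₀
  have hΦex : ∀ y : Y₀, ∃ x, ∃ hx : x ∈ Θ, σ x hx = (y : Y) := fun y => y.2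
  set Φ : Y₀ → X := fun y => (hΦex y).choose with hΦ
  have hΦspec : ∀ y : Y₀, ∃ hx : (Φ y) ∈ Θ, σ (Φ y) hx = (y : Y) := fun y =>
    (hΦex y).choose_spec
  have hΦΘ : ∀ y : Y₀, Φ y ∈ Θ := fun y => (hΦspec y).choose
  have hΦrep : ∀ (y : Y₀) (k : ↥Ar.topologicalClosure), G k (y : Y) = V ((k : C(X, E)) (Φ y)) := by
    intro y k
    obtain ⟨hx, hσy⟩ := hΦspec y
    rw [← hσy]
    exact hσ _ hx k
  have hΦsurj : ∀ x, x ∈ Θ → ∃ y : Y₀, Φ y = x := by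
    intro x hx
    refine ⟨⟨σ x hx, ⟨x, hx, rfl⟩⟩, ?_⟩
    set y : Y₀ := ⟨σ x hx, ⟨x, hx, rfl⟩⟩ with hy
    refine hsep _ (hΦΘ y) x ?_
    intro k
    have h1 : G k (σ x hx) = V ((k : C(X, E)) x) := hσ x hx k
    have h2 : G k ((y : Y₀) : Y) = V ((k : C(X, E)) (Φ y)) := hΦrep y k
    rw [show ((y : Y₀) : Y) = σ x hx from rfl] at h2
    exact V.injective (h2.symm.trans h1)
  have hΦcont : Continuous Φ := by
    rw [continuous_iff_continuousAt]
    intro y₀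
    rw [ContinuousAt, Filter.tendsto_def]
    intro W hW
    obtain ⟨f, hfA, hfn, hfx, hfsmall⟩ := hΘmem _ (hΦΘ y₀) W hW (1 / 2) (by norm_num) u₀ hu₀
    set k : ↥Ar.topologicalClosure := ⟨f, hmemK f hfA⟩ with hk
    have hN : IsOpen {y : Y | 1 / 2 < ‖G k y‖} :=
      isOpen_lt continuous_const ((map_continuous (G k)).norm)
    have hy₀ : (y₀ : Y) ∈ {y : Y | 1 / 2 < ‖G k y‖} := by
      have h1 := hΦrep y₀ k
      have h3 : ‖G k (y₀ : Y)‖ = 1 := by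
        rw [h1, show ((k : ↥Ar.topologicalClosure) : C(X, E)) (Φ y₀) = u₀ from hfx,
          V.norm_map, hu₀]
      show 1 / 2 < ‖G k (y₀ : Y)‖
      rw [h3]
      norm_num
    have hmem : Subtype.val ⁻¹' {y : Y | 1 / 2 < ‖G k y‖} ∈ nhds y₀ :=
      (hN.preimage continuous_subtype_val).mem_nhds hy₀
    refine Filter.mem_of_superset hmem ?_
    intro y hy
    show Φ y ∈ W
    by_contra hyW
    have h2 : ‖f (Φ y)‖ < 1 / 2 := hfsmall _ hyW
    have h3 : ‖G k (y : Y)‖ = ‖f (Φ y)‖ := by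
      rw [hΦrep y k, V.norm_map]
    have h4 : 1 / 2 < ‖G k (y : Y)‖ := hy
    rw [h3] at h4
    linarith
  refine ⟨Y₀, Φ, V, hVsurj, hΦcont, hΦΘ, hΦsurj, ?_⟩
  intro f hf y
  have h1 : G ⟨f, Ar.le_topologicalClosure hf⟩ = T f - T 0 := hGA f hf
  have h2 := hΦrep y ⟨f, Ar.le_topologicalClosure hf⟩
  rw [h1] at h2
  rw [show ((⟨f, Ar.le_topologicalClosure hf⟩ : ↥Ar.topologicalClosure) : C(X, E)) = f from rfl] at h2
  rw [ContinuousMap.sub_apply] at h2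
  exact sub_eq_iff_eq_add'.mp h2
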